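/- Basic estimate from the expansion: Assume ℙ is translation invariant. For every B ∈ ℱ and every k ∈ ℕ, |P_ℙ(η_k^EP ∈ B) − ℙ(B)| ≤ sup_{A ∈ 𝒜_{−∞}} |ℙ(B|A) − ℙ(B)|. -/

import Mathlib

open MeasureTheory ProbabilityTheory Filter Topology

namespace RWDRE

/-- Space-time sites: `ℤ^d × ℤ` (space, time). -/
abbrev Site (d : ℕ) : Type := (Fin d → ℤ) × ℤ

/-- Environments: `Ω = E^{ℤ^{d+1}}`. We write `η (x, t)` for `η_t(x)`. -/
abbrev Env (d : ℕ) (E : Type*) : Type _ := Site d → E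

variable {d : ℕ} {E : Type*}

/-- The shift `θ_{x,t}`: `(θ_{x,t} η)_s(y) = η_{s+t}(y+x)`. -/
def shift (x : Fin d → ℤ) (t : ℤ) (η : Env d E) : Env d E :=
  fun p => η (p.1 + x, p.2 + t)

section Meas

variable [MeasurableSpace E]

/-- The sub-σ-algebra `ℱ_Λ` generated by the cylinders of `Λ ⊆ ℤ^{d+1}`. -/
def cylSA (Λ : Set (Site d)) : MeasurableSpace (Env d E) :=
  MeasurableSpace.comap (fun (η : Env d E) (p : Λ) => η ↑p) MeasurableSpace.pi

/-- Elementary conditional probability `ℙ(B|A) = ℙ(B ∩ A)/ℙ(A)` as a real number. -/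
noncomputable def condProb {Ω : Type*} [MeasurableSpace Ω] (μ : Measure Ω) (B A : Set Ω) : ℝ :=
  (μ (B ∩ A)).toReal / (μ A).toReal

/-- Translation invariance of the environment law. -/
def IsTranslationInvariant (P : Measure (Env d E)) : Prop :=
  ∀ (x : Fin d → ℤ) (t : ℤ), P.map (shift x t) = P

/-- Ergodicity in the time direction. -/
def IsTimeErgodic (P : Measure (Env d E)) : Prop :=
  ∀ B : Set (Env d E), MeasurableSet B → shift (0 : Fin d → ℤ) 1 ⁻¹' B = B →
    P B = 0 ∨ P B = 1

/-- The standing assumptions on the jump kernel `α` of the random walk: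
nonnegative, normalized, jump range contained in the finite set `𝓡 ∋ o` with
`‖y‖₁ ≤ R` on `𝓡`, and of finite range `R` in its dependence on the environment. -/
structure IsTransition (𝓡 : Finset (Fin d → ℤ)) (R : ℕ)
    (α : Env d E → (Fin d → ℤ) → ℝ) : Prop where
  nonneg : ∀ η y, 0 ≤ α η y
  sum_one : ∀ η, ∑ y ∈ 𝓡, α η y = 1
  supp : ∀ η y, y ∉ 𝓡 → α η y = 0
  zero_mem : (0 : Fin d → ℤ) ∈ 𝓡
  range_le : ∀ y ∈ 𝓡, (∑ i, |y i|) ≤ (R : ℤ)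
  finRange : ∀ η σ z, (∀ y : Fin d → ℤ, (∀ i, |y i| ≤ (R : ℤ)) → η (y, 0) = σ (y, 0)) →
    α η z = α σ z

/-- Backwards trajectories `Γ_k`: `γ` is indexed by `j ∈ {0,…,k}`, where index `j`
corresponds to time `j - k ∈ {-k,…,0}`; `γ` ends at the origin and has increments in `𝓡`. -/
def IsPath (𝓡 : Finset (Fin d → ℤ)) (k : ℕ) (γ : Fin (k + 1) → (Fin d → ℤ)) : Prop :=
  γ (Fin.last k) = 0 ∧ ∀ i : Fin k, γ i.succ - γ i.castSucc ∈ 𝓡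

/-- Extension of a path to all of `ℕ` (constant after `k`). -/
def pad {k : ℕ} (γ : Fin (k + 1) → (Fin d → ℤ)) : ℕ → (Fin d → ℤ) :=
  fun j => γ ⟨min j k, Nat.lt_succ_of_le (Nat.min_le_right j k)⟩

/-- The event `A_{-k}^{-m}(γ,σ)`: the environment agrees with `σ` on the
`R`-neighbourhood of the path at the times `-k,…,-m` (index `j ↔` time `j - k`). -/
def pathEvent (R : ℕ) (k m : ℕ) (γ : Fin (k + 1) → (Fin d → ℤ)) (σ : Env d E) :
    Set (Env d E) :=
  {η | ∀ j : ℕ, j ≤ k - m → ∀ y : Fin d → ℤ, (∀ i, |y i| ≤ (R : ℤ)) →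
    η (y + pad γ j, (j : ℤ) - (k : ℤ)) = σ (y + pad γ j, (j : ℤ) - (k : ℤ))}

/-- `𝒜_{-k}^{-m}(γ)`: all possible (positive-probability) observations along `γ`. -/
def obsEvents (R : ℕ) (k m : ℕ) (γ : Fin (k + 1) → (Fin d → ℤ))
    (P : Measure (Env d E)) : Set (Set (Env d E)) :=
  {A | ∃ σ : Env d E, A = pathEvent R k m γ σ ∧ 0 < P A}

/-- `𝒜_{-∞}^{-m}`. -/
def obsFrom (𝓡 : Finset (Fin d → ℤ)) (R : ℕ) (P : Measure (Env d E)) (m : ℕ) :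
    Set (Set (Env d E)) :=
  {A | ∃ k, m ≤ k ∧ ∃ γ : Fin (k + 1) → (Fin d → ℤ), IsPath 𝓡 k γ ∧ A ∈ obsEvents R k m γ P}

/-- `𝒜_{-∞} = 𝒜_{-∞}^{-1}`. -/
abbrev obsAll (𝓡 : Finset (Fin d → ℤ)) (R : ℕ) (P : Measure (Env d E)) :
    Set (Set (Env d E)) := obsFrom 𝓡 R P 1

/-- The cone `𝒞(j) = {(x,t) : t ≥ j, ‖x‖₁ ≤ (R+1)t}`. -/
def coneSet (d : ℕ) (R : ℕ) (j : ℕ) : Set (Site d) :=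
  {p | (j : ℤ) ≤ p.2 ∧ (∑ i, |p.1 i|) ≤ ((R : ℤ) + 1) * p.2}

/-- The forward half-space `ℍ = ℤ^d × ℤ_{≥0}`. -/
def halfSpace (d : ℕ) : Set (Site d) := {p | 0 ≤ p.2}

/-- `Λ(l) = {z ∈ ℍ : ‖z‖₁ ≥ l}`. -/
def lamSet (d : ℕ) (l : ℕ) : Set (Site d) :=
  {p | 0 ≤ p.2 ∧ (l : ℤ) ≤ (∑ i, |p.1 i|) + p.2}

/-- One step of the environment process applied to a measure: `ℚ ↦ ℚK`, where
`K(η,·) = Σ_{y∈𝓡} α(η,y) δ_{θ_{y,1}η}`. -/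
noncomputable def stepEP (𝓡 : Finset (Fin d → ℤ)) (α : Env d E → (Fin d → ℤ) → ℝ)
    (Q : Measure (Env d E)) : Measure (Env d E) :=
  ∑ y ∈ 𝓡, (Q.withDensity fun η => ENNReal.ofReal (α η y)).map (shift y 1)

/-- `ℚ` is invariant for the environment process. -/
def IsInvariantEP (𝓡 : Finset (Fin d → ℤ)) (α : Env d E → (Fin d → ℤ) → ℝ)
    (Q : Measure (Env d E)) : Prop :=
  stepEP 𝓡 α Q = Q

/-- `ℚ` is ergodic for the environment process: every harmonic indicator is a.s. constant. -/
def IsErgodicEP (𝓡 : Finset (Fin d → ℤ)) (α : Env d E → (Fin d → ℤ) → ℝ)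
    (Q : Measure (Env d E)) : Prop :=
  ∀ B : Set (Env d E), MeasurableSet B →
    (∀ᵐ η ∂Q, ∑ y ∈ 𝓡, α η y * Set.indicator B (fun _ => (1 : ℝ)) (shift y 1 η)
        = Set.indicator B (fun _ => (1 : ℝ)) η) →
    Q B = 0 ∨ Q B = 1

/-- `P` is the annealed (joint) law of the environment (with law `ℙ`) and the walk
`(X_t)_{t≥0}` with `X_0 = o` and quenched transitions
`P_η(X_{t+1} = y + z | X_t = y) = α(θ_{y,t}η, z)`, characterized through its
finite-dimensional distributions. -/
def IsAnnealedLaw (α : Env d E → (Fin d → ℤ) → ℝ) (P : Measure (Env d E))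
    (PP : Measure (Env d E × (ℕ → (Fin d → ℤ)))) : Prop :=
  ∀ (k : ℕ) (x : ℕ → (Fin d → ℤ)) (B : Set (Env d E)), MeasurableSet B →
    PP {p | p.1 ∈ B ∧ ∀ i ≤ k, p.2 i = x i} =
      if x 0 = 0 then
        ∫⁻ η in B, ∏ i ∈ Finset.range k,
          ENNReal.ofReal (α (shift (x i) (i : ℤ) η) (x (i + 1) - x i)) ∂P
      else 0

end Meas

end RWDRE

namespace RWDRE

open MeasureTheory ProbabilityTheory Filter Topology

section AuxProof

open scoped ENNReal

variable {d : ℕ} {E : Type*}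

lemma shift_shift (x x' : Fin d → ℤ) (t t' : ℤ) (η : Env d E) :
    shift x t (shift x' t' η) = shift (x + x') (t + t') η := by
  funext p; simp [shift, add_assoc]

lemma pad_eq {k : ℕ} (x : Fin (k + 1) → (Fin d → ℤ)) (j : ℕ) (h : j ≤ k) :
    pad x j = x ⟨j, Nat.lt_succ_of_le h⟩ := by
  unfold pad
  exact congrArg x (Fin.ext (Nat.min_eq_left h))

/-- The `R`-box in `ℤ^d`. -/
def Box (d R : ℕ) : Type := {y : Fin d → ℤ // ∀ i, |y i| ≤ (R : ℤ)}

instance (d R : ℕ) : Finite (Box d R) := by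
  apply Finite.of_injective (fun y : Box d R => fun i : Fin d =>
    (⟨y.1 i, Finset.mem_Icc.mpr (abs_le.mp (y.2 i))⟩ : (Finset.Icc (-(R : ℤ)) (R : ℤ))))
  intro y z h
  apply Subtype.ext; funext i
  exact congrArg Subtype.val (congrFun h i)

variable [MeasurableSpace E]

lemma measurable_shift (x : Fin d → ℤ) (t : ℤ) :
    Measurable (shift x t : Env d E → Env d E) :=
  measurable_pi_lambda _ fun _ => measurable_pi_apply _

lemma env_nonempty (P : Measure (Env d E)) [IsProbabilityMeasure P] :
    Nonempty (Env d E) := by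
  rcases isEmpty_or_nonempty (Env d E) with h | h
  · have h1 : (Set.univ : Set (Env d E)) = ∅ := Set.univ_eq_empty_iff.mpr h
    have h2 := measure_univ (μ := P)
    rw [h1, measure_empty] at h2
    exact absurd h2 zero_ne_one
  · exact h

variable {𝓡 : Finset (Fin d → ℤ)} {R : ℕ} {α : Env d E → (Fin d → ℤ) → ℝ}

lemma measurable_alpha [Finite E] [MeasurableSingletonClass E]
    (hα : IsTransition 𝓡 R α) (η₀ : Env d E)
    (z : Fin d → ℤ) : Measurable fun η => α η z := by
  have key : (fun η => α η z) = (fun v : Box d R → E =>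
      α (fun p => if hp : p.2 = 0 ∧ ∀ i, |p.1 i| ≤ (R : ℤ) then v ⟨p.1, hp.2⟩ else η₀ p) z)
      ∘ (fun η (y : Box d R) => η (y.1, 0)) := by
    funext η
    refine (hα.finRange _ η z fun y hy => ?_).symm
    simp [hy]
  rw [key]
  exact (measurable_of_countable _).comp
    (measurable_pi_lambda _ fun _ => measurable_pi_apply _)

/-- Restriction of the environment to the `R`-boxes around the backward path. -/
def rho (R k : ℕ) (γ : Fin (k + 1) → (Fin d → ℤ)) (η : Env d E) :
    Fin k → Box d R → E :=
  fun j y => η (y.1 + pad γ j.1, (j.1 : ℤ) - (k : ℤ))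

lemma measurable_rho (R k : ℕ) (γ : Fin (k + 1) → (Fin d → ℤ)) :
    Measurable (rho (E := E) R k γ) :=
  measurable_pi_lambda _ fun _ => measurable_pi_lambda _ fun _ => measurable_pi_apply _

omit [MeasurableSpace E] in
lemma pathEvent_eq {k : ℕ} (hk : 1 ≤ k) (γ : Fin (k + 1) → (Fin d → ℤ)) (σ : Env d E) :
    pathEvent R k 1 γ σ = rho R k γ ⁻¹' {rho R k γ σ} := by
  ext η
  simp only [pathEvent, Set.mem_setOf_eq, Set.mem_preimage, Set.mem_singleton_iff]
  constructor
  · intro h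
    funext j y
    exact h j.1 (by have := j.isLt; omega) y.1 y.2
  · intro h j hj y hy
    have hjk : j < k := by omega
    exact congrFun (congrFun h ⟨j, hjk⟩) ⟨y, hy⟩

/-- The weight of a path (as a function of the environment at time `0`,
after recentering at the endpoint). -/
noncomputable def pathW (α : Env d E → (Fin d → ℤ) → ℝ) (k : ℕ)
    (x : Fin (k + 1) → (Fin d → ℤ)) (η : Env d E) : ℝ≥0∞ :=
  ∏ i ∈ Finset.range k, ENNReal.ofReal
    (α (shift (pad (fun j => x j - x (Fin.last k)) i) ((i : ℤ) - (k : ℤ)) η)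
      (pad x (i + 1) - pad x i))

lemma measurable_pathW [Finite E] [MeasurableSingletonClass E]
    (hα : IsTransition 𝓡 R α) (η₀ : Env d E) (k : ℕ)
    (x : Fin (k + 1) → (Fin d → ℤ)) : Measurable (pathW α k x) := by
  unfold pathW
  refine Finset.measurable_prod _ fun i _ => ?_
  exact ENNReal.measurable_ofReal.comp
    ((measurable_alpha hα η₀ _).comp (measurable_shift _ _))

omit [MeasurableSpace E] in
lemma pathW_congr (hα : IsTransition 𝓡 R α) (k : ℕ)
    (x : Fin (k + 1) → (Fin d → ℤ)) {η σ : Env d E}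
    (h : rho R k (fun j => x j - x (Fin.last k)) η
       = rho R k (fun j => x j - x (Fin.last k)) σ) :
    pathW α k x η = pathW α k x σ := by
  unfold pathW
  refine Finset.prod_congr rfl fun i hi => ?_
  rw [Finset.mem_range] at hi
  congr 1
  refine hα.finRange _ _ _ fun y hy => ?_
  have h2 := congrFun (congrFun h ⟨i, hi⟩) ⟨y, hy⟩
  simpa [rho, shift] using h2

end AuxProof
section AuxProof2

open scoped ENNReal

variable {d : ℕ} {E : Type*} [MeasurableSpace E]
variable {𝓡 : Finset (Fin d → ℤ)} {R : ℕ} {α : Env d E → (Fin d → ℤ) → ℝ}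

lemma decomp [Finite E] [MeasurableSingletonClass E] (hα : IsTransition 𝓡 R α)
    (P : Measure (Env d E)) [IsProbabilityMeasure P]
    (htrans : IsTranslationInvariant P)
    (PP : Measure (Env d E × (ℕ → (Fin d → ℤ))))
    (hPP : IsAnnealedLaw α P PP)
    (B : Set (Env d E)) (hB : MeasurableSet B) (k : ℕ) :
    PP {p | shift (p.2 k) (k : ℤ) p.1 ∈ B}
      = ∑' x : Fin (k + 1) → (Fin d → ℤ),
          (if x 0 = 0 then ∫⁻ η in B, pathW α k x η ∂P else 0) := by
  have hEnv : Nonempty (Env d E) := env_nonempty P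
  set f : (Fin (k + 1) → (Fin d → ℤ)) → Set (Env d E × (ℕ → (Fin d → ℤ))) :=
    fun x => {p | p.1 ∈ shift (x (Fin.last k)) (k : ℤ) ⁻¹' B ∧ ∀ i ≤ k, p.2 i = pad x i}
    with hf
  have hcover : {p : Env d E × (ℕ → (Fin d → ℤ)) | shift (p.2 k) (k : ℤ) p.1 ∈ B}
      = ⋃ x, f x := by
    ext p
    simp only [hf, Set.mem_setOf_eq, Set.mem_iUnion, Set.mem_preimage]
    constructor
    · intro hp
      refine ⟨fun i => p.2 i.1, hp, fun i hi => ?_⟩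
      rw [pad_eq _ i hi]
    · rintro ⟨x, hx1, hx2⟩
      have hpk : p.2 k = x (Fin.last k) := by
        have h := hx2 k le_rfl
        rwa [pad_eq _ k le_rfl] at h
      rwa [hpk]
  have hdisj : Pairwise (Function.onFun Disjoint f) := by
    intro x x' hxx'
    rw [Function.onFun, Set.disjoint_left]
    rintro p ⟨-, h2⟩ ⟨-, h2'⟩
    apply hxx'
    funext i
    have e1 := h2 i.1 (Nat.lt_succ_iff.mp i.isLt)
    have e2 := h2' i.1 (Nat.lt_succ_iff.mp i.isLt)
    rw [pad_eq _ _ (Nat.lt_succ_iff.mp i.isLt)] at e1 e2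
    exact e1.symm.trans e2
  have hmeas : ∀ x, MeasurableSet (f x) := by
    intro x
    have hfe : f x = (fun p : Env d E × (ℕ → (Fin d → ℤ)) => p.1) ⁻¹'
        (shift (x (Fin.last k)) (k : ℤ) ⁻¹' B)
        ∩ ⋂ i ∈ Set.Iic k, {p : Env d E × (ℕ → (Fin d → ℤ)) | p.2 i = pad x i} := by
      ext p
      simp [hf, Set.mem_Iic]
    rw [hfe]
    refine (measurable_fst ((measurable_shift _ _) hB)).inter
      (MeasurableSet.biInter (Set.to_countable _) fun i _ => ?_)
    exact ((measurable_pi_apply i).comp measurable_snd) (measurableSet_singleton _)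
  rw [hcover, measure_iUnion hdisj hmeas]
  refine tsum_congr fun x => ?_
  have hstep := hPP k (pad x) (shift (x (Fin.last k)) (k : ℤ) ⁻¹' B)
    ((measurable_shift _ _) hB)
  have hx0 : pad x 0 = x 0 := by rw [pad_eq _ 0 (Nat.zero_le k)]; rfl
  simp only [hf]
  rw [hstep, hx0]
  by_cases h0 : x 0 = 0
  · simp only [if_pos h0]
    conv_rhs => rw [← htrans (x (Fin.last k)) (k : ℤ)]
    rw [setLIntegral_map hB (measurable_pathW hα (Classical.arbitrary _) k x)
      (measurable_shift _ _)]
    refine lintegral_congr fun η => ?_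
    unfold pathW
    refine Finset.prod_congr rfl fun i hi => ?_
    rw [Finset.mem_range] at hi
    have h1 : pad (fun j => x j - x (Fin.last k)) i + x (Fin.last k) = pad x i := by
      rw [pad_eq _ i hi.le, pad_eq _ i hi.le]
      abel
    have h2 : (i : ℤ) - (k : ℤ) + (k : ℤ) = (i : ℤ) := by ring
    rw [shift_shift, h1, h2]
  · simp only [if_neg h0]

end AuxProof2
section AuxProof3

open scoped ENNReal

variable {d : ℕ} {E : Type*} [MeasurableSpace E]
variable {𝓡 : Finset (Fin d → ℤ)} {R : ℕ} {α : Env d E → (Fin d → ℤ) → ℝ}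

lemma obs_mem (hα : IsTransition 𝓡 R α) (P : Measure (Env d E)) {k : ℕ} (hk : 1 ≤ k)
    (x : Fin (k + 1) → (Fin d → ℤ)) (hx : ∀ i : Fin k, x i.succ - x i.castSucc ∈ 𝓡)
    (v : Fin k → Box d R → E)
    (hpos : P (rho R k (fun j => x j - x (Fin.last k)) ⁻¹' {v}) ≠ 0) :
    rho (E := E) R k (fun j => x j - x (Fin.last k)) ⁻¹' {v} ∈ obsAll 𝓡 R P := by
  obtain ⟨σ, hσ⟩ := nonempty_of_measure_ne_zero hpos
  have hσv : rho R k (fun j => x j - x (Fin.last k)) σ = v := hσ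
  refine ⟨k, hk, fun j => x j - x (Fin.last k), ⟨sub_self _, fun i => ?_⟩, σ, ?_, ?_⟩
  · simpa [sub_sub_sub_cancel_right] using hx i
  · rw [pathEvent_eq hk, hσv]
  · rwa [pos_iff_ne_zero]

omit [MeasurableSpace E] in
lemma Tx_bad_zero (hα : IsTransition 𝓡 R α) {k : ℕ}
    (x : Fin (k + 1) → (Fin d → ℤ)) {i : Fin k} (hi : x i.succ - x i.castSucc ∉ 𝓡)
    (η : Env d E) : pathW α k x η = 0 := by
  unfold pathW
  apply Finset.prod_eq_zero (Finset.mem_range.mpr i.isLt)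
  have hΔ : pad x (i.1 + 1) - pad x i.1 = x i.succ - x i.castSucc := by
    rw [pad_eq _ _ i.isLt, pad_eq _ _ (le_of_lt i.isLt)]
    rfl
  rw [hΔ, hα.supp _ _ hi, ENNReal.ofReal_zero]

lemma Tx_upper [Finite E] [MeasurableSingletonClass E] (hα : IsTransition 𝓡 R α)
    (P : Measure (Env d E)) [IsProbabilityMeasure P] {k : ℕ} (hk : 1 ≤ k)
    (B : Set (Env d E)) (hB : MeasurableSet B) (r : ℝ≥0∞)
    (hr : ∀ A ∈ obsAll 𝓡 R P, P (B ∩ A) ≤ r * P A)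
    (x : Fin (k + 1) → (Fin d → ℤ)) :
    (if x 0 = 0 then ∫⁻ η in B, pathW α k x η ∂P else 0)
      ≤ r * (if x 0 = 0 then ∫⁻ η in Set.univ, pathW α k x η ∂P else 0) := by
  by_cases h0 : x 0 = 0
  · simp only [if_pos h0]
    by_cases hx : ∀ i : Fin k, x i.succ - x i.castSucc ∈ 𝓡
    · set γ : Fin (k + 1) → (Fin d → ℤ) := fun j => x j - x (Fin.last k) with hγ
      have hAmeas : ∀ v : Fin k → Box d R → E,
          MeasurableSet (rho (E := E) R k γ ⁻¹' {v}) :=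
        fun v => measurable_rho R k γ (measurableSet_singleton v)
      have hpart : ∀ s : Set (Env d E), MeasurableSet s →
          ∫⁻ η in s, pathW α k x η ∂P
            = ∑' v : Fin k → Box d R → E,
                ∫⁻ η in s ∩ rho R k γ ⁻¹' {v}, pathW α k x η ∂P := by
        intro s hs
        have hsu : s = ⋃ v : Fin k → Box d R → E, s ∩ rho R k γ ⁻¹' {v} := by
          ext η
          constructor
          · intro h; exact Set.mem_iUnion.mpr ⟨rho R k γ η, h, rfl⟩
          · intro h; obtain ⟨v, hv, -⟩ := Set.mem_iUnion.mp h; exact hv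
        conv_lhs => rw [hsu]
        refine lintegral_iUnion (fun v => hs.inter (hAmeas v)) ?_ _
        intro v w hvw
        refine Set.disjoint_left.mpr ?_
        rintro η ⟨-, h1⟩ ⟨-, h2⟩
        exact hvw ((Set.mem_singleton_iff.mp h1).symm.trans (Set.mem_singleton_iff.mp h2))
      rw [hpart B hB, hpart Set.univ MeasurableSet.univ, ← ENNReal.tsum_mul_left]
      refine ENNReal.tsum_le_tsum fun v => ?_
      rw [Set.univ_inter]
      rcases Set.eq_empty_or_nonempty (rho (E := E) R k γ ⁻¹' {v}) with hemp | ⟨σ, hσ⟩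
      · simp [hemp]
      · have hσv : rho R k γ σ = v := hσ
        have hconst : ∀ s : Set (Env d E), MeasurableSet s →
            ∫⁻ η in s ∩ rho R k γ ⁻¹' {v}, pathW α k x η ∂P
              = pathW α k x σ * P (s ∩ rho R k γ ⁻¹' {v}) := by
          intro s hs
          rw [setLIntegral_congr_fun (hs.inter (hAmeas v))
            (fun η hη =>
              pathW_congr hα k x (((Set.mem_singleton_iff.mp hη.2).trans hσv.symm)))]
          exact setLIntegral_const _ _
        rw [hconst B hB]
        have hconst2 : ∫⁻ η in rho R k γ ⁻¹' {v}, pathW α k x η ∂P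
            = pathW α k x σ * P (rho R k γ ⁻¹' {v}) := by
          rw [← Set.univ_inter (rho R k γ ⁻¹' {v})]
          exact hconst Set.univ MeasurableSet.univ
        rw [hconst2]
        rcases eq_or_ne (P (rho R k γ ⁻¹' {v})) 0 with hz | hz
        · have hz2 : P (B ∩ rho R k γ ⁻¹' {v}) = 0 :=
            measure_mono_null Set.inter_subset_right hz
          simp [hz, hz2]
        · have hb := hr _ (obs_mem hα P hk x hx v hz)
          calc pathW α k x σ * P (B ∩ rho R k γ ⁻¹' {v})
              ≤ pathW α k x σ * (r * P (rho R k γ ⁻¹' {v})) := mul_le_mul_right hb _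
            _ = r * (pathW α k x σ * P (rho R k γ ⁻¹' {v})) := by ring
    · push_neg at hx
      obtain ⟨i, hi⟩ := hx
      have hW : ∀ η, pathW α k x η = 0 := Tx_bad_zero hα x hi
      simp [hW]
  · simp [h0]

lemma Tx_lower [Finite E] [MeasurableSingletonClass E] (hα : IsTransition 𝓡 R α)
    (P : Measure (Env d E)) [IsProbabilityMeasure P] {k : ℕ} (hk : 1 ≤ k)
    (B : Set (Env d E)) (hB : MeasurableSet B) (q : ℝ≥0∞)
    (hq : ∀ A ∈ obsAll 𝓡 R P, q * P A ≤ P (B ∩ A))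
    (x : Fin (k + 1) → (Fin d → ℤ)) :
    q * (if x 0 = 0 then ∫⁻ η in Set.univ, pathW α k x η ∂P else 0)
      ≤ (if x 0 = 0 then ∫⁻ η in B, pathW α k x η ∂P else 0) := by
  by_cases h0 : x 0 = 0
  · simp only [if_pos h0]
    by_cases hx : ∀ i : Fin k, x i.succ - x i.castSucc ∈ 𝓡
    · set γ : Fin (k + 1) → (Fin d → ℤ) := fun j => x j - x (Fin.last k) with hγ
      have hAmeas : ∀ v : Fin k → Box d R → E,
          MeasurableSet (rho (E := E) R k γ ⁻¹' {v}) :=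
        fun v => measurable_rho R k γ (measurableSet_singleton v)
      have hpart : ∀ s : Set (Env d E), MeasurableSet s →
          ∫⁻ η in s, pathW α k x η ∂P
            = ∑' v : Fin k → Box d R → E,
                ∫⁻ η in s ∩ rho R k γ ⁻¹' {v}, pathW α k x η ∂P := by
        intro s hs
        have hsu : s = ⋃ v : Fin k → Box d R → E, s ∩ rho R k γ ⁻¹' {v} := by
          ext η
          constructor
          · intro h; exact Set.mem_iUnion.mpr ⟨rho R k γ η, h, rfl⟩
          · intro h; obtain ⟨v, hv, -⟩ := Set.mem_iUnion.mp h; exact hv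
        conv_lhs => rw [hsu]
        refine lintegral_iUnion (fun v => hs.inter (hAmeas v)) ?_ _
        intro v w hvw
        refine Set.disjoint_left.mpr ?_
        rintro η ⟨-, h1⟩ ⟨-, h2⟩
        exact hvw ((Set.mem_singleton_iff.mp h1).symm.trans (Set.mem_singleton_iff.mp h2))
      rw [hpart B hB, hpart Set.univ MeasurableSet.univ, ← ENNReal.tsum_mul_left]
      refine ENNReal.tsum_le_tsum fun v => ?_
      rw [Set.univ_inter]
      rcases Set.eq_empty_or_nonempty (rho (E := E) R k γ ⁻¹' {v}) with hemp | ⟨σ, hσ⟩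
      · simp [hemp]
      · have hσv : rho R k γ σ = v := hσ
        have hconst : ∀ s : Set (Env d E), MeasurableSet s →
            ∫⁻ η in s ∩ rho R k γ ⁻¹' {v}, pathW α k x η ∂P
              = pathW α k x σ * P (s ∩ rho R k γ ⁻¹' {v}) := by
          intro s hs
          rw [setLIntegral_congr_fun (hs.inter (hAmeas v))
            (fun η hη =>
              pathW_congr hα k x (((Set.mem_singleton_iff.mp hη.2).trans hσv.symm)))]
          exact setLIntegral_const _ _
        rw [hconst B hB]
        have hconst2 : ∫⁻ η in rho R k γ ⁻¹' {v}, pathW α k x η ∂P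
            = pathW α k x σ * P (rho R k γ ⁻¹' {v}) := by
          rw [← Set.univ_inter (rho R k γ ⁻¹' {v})]
          exact hconst Set.univ MeasurableSet.univ
        rw [hconst2]
        rcases eq_or_ne (P (rho R k γ ⁻¹' {v})) 0 with hz | hz
        · simp [hz]
        · have hb := hq _ (obs_mem hα P hk x hx v hz)
          calc q * (pathW α k x σ * P (rho R k γ ⁻¹' {v}))
              = pathW α k x σ * (q * P (rho R k γ ⁻¹' {v})) := by ring
            _ ≤ pathW α k x σ * P (B ∩ rho R k γ ⁻¹' {v}) := mul_le_mul_right hb _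
    · push_neg at hx
      obtain ⟨i, hi⟩ := hx
      have hW : ∀ η, pathW α k x η = 0 := Tx_bad_zero hα x hi
      simp [hW]
  · simp [h0]

lemma obsAll_nonempty [Finite E] [MeasurableSingletonClass E]
    (hα : IsTransition 𝓡 R α) (P : Measure (Env d E)) [IsProbabilityMeasure P] :
    ∃ A, A ∈ obsAll 𝓡 R P := by
  set x : Fin 2 → (Fin d → ℤ) := fun _ => 0 with hxdef
  set γ : Fin 2 → (Fin d → ℤ) := fun j => x j - x (Fin.last 1) with hγ
  have hAmeas : ∀ v : Fin 1 → Box d R → E,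
      MeasurableSet (rho (E := E) R 1 γ ⁻¹' {v}) :=
    fun v => measurable_rho R 1 γ (measurableSet_singleton v)
  have hsu : (Set.univ : Set (Env d E))
      = ⋃ v : Fin 1 → Box d R → E, rho R 1 γ ⁻¹' {v} := by
    ext η
    simp only [Set.mem_univ, true_iff]
    exact Set.mem_iUnion.mpr ⟨rho R 1 γ η, rfl⟩
  have h1 : (1 : ℝ≥0∞) = ∑' v : Fin 1 → Box d R → E, P (rho R 1 γ ⁻¹' {v}) := by
    rw [← measure_univ (μ := P), hsu]
    refine measure_iUnion ?_ hAmeas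
    intro v w hvw
    refine Set.disjoint_left.mpr ?_
    rintro η h1 h2
    exact hvw ((Set.mem_singleton_iff.mp h1).symm.trans (Set.mem_singleton_iff.mp h2))
  have hex : ∃ v : Fin 1 → Box d R → E, P (rho (E := E) R 1 γ ⁻¹' {v}) ≠ 0 := by
    by_contra h
    push_neg at h
    rw [ENNReal.tsum_eq_zero.mpr h] at h1
    exact one_ne_zero h1
  obtain ⟨v, hv⟩ := hex
  exact ⟨_, obs_mem hα P le_rfl x (fun i => by simpa [hxdef] using hα.zero_mem) v hv⟩

end AuxProof3

/-- Lemma 4.1, basic estimate from the expansion. For every `B ∈ ℱ`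
and every `k`, `|P_ℙ(η_k^EP ∈ B) − ℙ(B)| ≤ sup_{A ∈ 𝒜_{-∞}} |ℙ(B|A) − ℙ(B)|`
(formulated as: the left-hand side is at most any upper bound of the right-hand family). -/
theorem basic_estimate_EP
    {d : ℕ} {E : Type*} [Finite E] [MeasurableSpace E] [MeasurableSingletonClass E]
    (𝓡 : Finset (Fin d → ℤ)) (R : ℕ) (α : Env d E → (Fin d → ℤ) → ℝ)
    (hα : IsTransition 𝓡 R α)
    (P : Measure (Env d E)) [IsProbabilityMeasure P]
    (htrans : IsTranslationInvariant P)
    (PP : Measure (Env d E × (ℕ → (Fin d → ℤ)))) [IsProbabilityMeasure PP]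
    (hPP : IsAnnealedLaw α P PP)
    (B : Set (Env d E)) (hB : MeasurableSet B) (k : ℕ)
    (c : ℝ) (hc : ∀ A ∈ obsAll 𝓡 R P, |condProb P B A - (P B).toReal| ≤ c) :
    |(PP {p | shift (p.2 k) (k : ℤ) p.1 ∈ B}).toReal - (P B).toReal| ≤ c := by
  have hEnv : Nonempty (Env d E) := env_nonempty P
  obtain ⟨A₀, hA₀⟩ := obsAll_nonempty hα P
  have hc0 : 0 ≤ c := le_trans (abs_nonneg _) (hc A₀ hA₀)
  have hb0 : 0 ≤ (P B).toReal := ENNReal.toReal_nonneg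
  rcases Nat.eq_zero_or_pos k with hk0 | hk1
  · subst hk0
    have hd := decomp hα P htrans PP hPP B hB 0
    rw [hd, tsum_eq_single (fun _ => (0 : Fin d → ℤ)) ?_]
    · rw [if_pos rfl]
      have hone : ∀ η : Env d E, pathW α 0 (fun _ => (0 : Fin d → ℤ)) η = 1 :=
        fun η => Finset.prod_range_zero _
      rw [lintegral_congr fun η => hone η, setLIntegral_one]
      simpa using hc0
    · intro x hx
      rw [if_neg]
      intro h0
      apply hx
      funext i
      have hi : i = 0 := Fin.eq_zero i
      rw [hi]
      exact h0
  · have hk : 1 ≤ k := hk1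
    have hupper : ∀ A ∈ obsAll 𝓡 R P,
        P (B ∩ A) ≤ ENNReal.ofReal ((P B).toReal + c) * P A := by
      intro A hA
      rcases eq_or_ne (P A) 0 with hz | hz
      · simp [measure_mono_null Set.inter_subset_right hz]
      · have h1 := abs_le.mp (hc A hA)
        have htA : 0 < (P A).toReal := ENNReal.toReal_pos hz (measure_ne_top _ _)
        have hcp : 0 ≤ condProb P B A :=
          div_nonneg ENNReal.toReal_nonneg ENNReal.toReal_nonneg
        have h4 : condProb P B A ≤ (P B).toReal + c := by linarith [h1.2]
        have hbc : (0 : ℝ) ≤ (P B).toReal + c := le_trans hcp h4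
        have h4' : (P (B ∩ A)).toReal / (P A).toReal ≤ (P B).toReal + c := by
          unfold condProb at h4; exact h4
        have h2 : (P (B ∩ A)).toReal ≤ ((P B).toReal + c) * (P A).toReal :=
          (div_le_iff₀ htA).mp h4'
        calc P (B ∩ A) = ENNReal.ofReal (P (B ∩ A)).toReal :=
              (ENNReal.ofReal_toReal (measure_ne_top _ _)).symm
          _ ≤ ENNReal.ofReal (((P B).toReal + c) * (P A).toReal) :=
              ENNReal.ofReal_le_ofReal h2
          _ = ENNReal.ofReal ((P B).toReal + c) * P A := by
              rw [ENNReal.ofReal_mul hbc, ENNReal.ofReal_toReal (measure_ne_top _ _)]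
    have hlower : ∀ A ∈ obsAll 𝓡 R P,
        ENNReal.ofReal ((P B).toReal - c) * P A ≤ P (B ∩ A) := by
      intro A hA
      rcases le_or_gt ((P B).toReal - c) 0 with hbc | hbc
      · simp [ENNReal.ofReal_eq_zero.mpr hbc]
      · rcases eq_or_ne (P A) 0 with hz | hz
        · simp [hz]
        · have h1 := abs_le.mp (hc A hA)
          have htA : 0 < (P A).toReal := ENNReal.toReal_pos hz (measure_ne_top _ _)
          have h4 : (P B).toReal - c ≤ condProb P B A := by linarith [h1.1]
          have h4' : (P B).toReal - c ≤ (P (B ∩ A)).toReal / (P A).toReal := by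
            unfold condProb at h4; exact h4
          have h2 : ((P B).toReal - c) * (P A).toReal ≤ (P (B ∩ A)).toReal :=
            (le_div_iff₀ htA).mp h4'
          calc ENNReal.ofReal ((P B).toReal - c) * P A
              = ENNReal.ofReal (((P B).toReal - c) * (P A).toReal) := by
                rw [ENNReal.ofReal_mul hbc.le, ENNReal.ofReal_toReal (measure_ne_top _ _)]
            _ ≤ ENNReal.ofReal (P (B ∩ A)).toReal := ENNReal.ofReal_le_ofReal h2
            _ = P (B ∩ A) := ENNReal.ofReal_toReal (measure_ne_top _ _)
    have hdB := decomp hα P htrans PP hPP B hB k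
    have hdU := decomp hα P htrans PP hPP Set.univ MeasurableSet.univ k
    have hUone : PP {p : Env d E × (ℕ → (Fin d → ℤ)) |
        shift (p.2 k) (k : ℤ) p.1 ∈ (Set.univ : Set (Env d E))} = 1 := by
      have he : {p : Env d E × (ℕ → (Fin d → ℤ)) |
          shift (p.2 k) (k : ℤ) p.1 ∈ (Set.univ : Set (Env d E))} = Set.univ := by
        ext p; simp
      rw [he]
      exact measure_univ
    have hsum1 : ∑' x : Fin (k + 1) → (Fin d → ℤ),
        (if x 0 = 0 then ∫⁻ η in Set.univ, pathW α k x η ∂P else 0) = 1 := by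
      rw [← hdU, hUone]
    have hup : PP {p | shift (p.2 k) (k : ℤ) p.1 ∈ B}
        ≤ ENNReal.ofReal ((P B).toReal + c) := by
      rw [hdB]
      refine le_trans (ENNReal.tsum_le_tsum (Tx_upper hα P hk B hB _ hupper)) ?_
      rw [ENNReal.tsum_mul_left, hsum1, mul_one]
    have hlo : ENNReal.ofReal ((P B).toReal - c)
        ≤ PP {p | shift (p.2 k) (k : ℤ) p.1 ∈ B} := by
      rw [hdB]
      refine le_trans ?_ (ENNReal.tsum_le_tsum (Tx_lower hα P hk B hB _ hlower))
      rw [ENNReal.tsum_mul_left, hsum1, mul_one]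
    have hne : PP {p | shift (p.2 k) (k : ℤ) p.1 ∈ B} ≠ ⊤ := measure_ne_top _ _
    rw [abs_le]
    constructor
    · have h6 := (ENNReal.ofReal_le_iff_le_toReal hne).mp hlo
      linarith
    · have h5 : (PP {p | shift (p.2 k) (k : ℤ) p.1 ∈ B}).toReal ≤ (P B).toReal + c :=
        ENNReal.toReal_le_of_le_ofReal (by linarith) hup
      linarith

end RWDRE
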